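/- Let f : H' → H be a continuous map between Banach spaces of the form f = l + c, where l is a bounded linear Fredholm operator and c is a compact map (c sends bounded subsets to relatively compact subsets), and suppose preimages under f of bounded sets are bounded. Then f is a proper map: the preimage of every compact subset of H is compact. -/

import Mathlib

open Set Bornology Filter Topology

set_option maxHeartbeats 1000000
set_option synthInstance.maxHeartbeats 400000

/-- If `f = l + c : H' → H` with `l` a bounded linear Fredholm operator and `c` a compact
map (bounded sets have relatively compact images), and preimages under `f` of bounded
sets are bounded, then `f` is proper: preimages of compact sets are compact. -/
theorem stmt_14 {H' H : Type*}
    [NormedAddCommGroup H'] [NormedSpace ℝ H'] [CompleteSpace H']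
    [NormedAddCommGroup H] [NormedSpace ℝ H] [CompleteSpace H]
    (l : H' →L[ℝ] H)
    (hker : FiniteDimensional ℝ (LinearMap.ker (l : H' →ₗ[ℝ] H)))
    (hcoker : FiniteDimensional ℝ (H ⧸ LinearMap.range (l : H' →ₗ[ℝ] H)))
    (hclosed : IsClosed (Set.range l))
    (c : H' → H) (hc : Continuous c)
    (hcompact : ∀ B : Set H', IsBounded B → IsCompact (closure (c '' B)))
    (hbdd : ∀ B : Set H, IsBounded B → IsBounded ((fun v => l v + c v) ⁻¹' B)) :
    ∀ K : Set H, IsCompact K → IsCompact ((fun v => l v + c v) ⁻¹' K) := by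
  intro K hK
  set f : H' → H := fun v => l v + c v with hf
  have hfc : Continuous f := l.continuous.add hc
  set P : Set H' := f ⁻¹' K with hP
  have hPclosed : IsClosed P := hK.isClosed.preimage hfc
  have hPbdd : IsBounded P := hbdd K hK.isBounded
  -- kernel is closed (finite-dimensional) and closed complemented
  have hkclosed : IsClosed ((LinearMap.ker (l : H' →ₗ[ℝ] H) : Submodule ℝ H') : Set H') :=
    Submodule.closed_of_finiteDimensional _
  obtain ⟨q, hqclosed, hcompl⟩ :=
    (Submodule.ClosedComplemented.of_finiteDimensional
      (LinearMap.ker (l : H' →ₗ[ℝ] H) : Submodule ℝ H')).exists_isClosed_isCompl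
  haveI : CompleteSpace q := hqclosed.completeSpace_coe
  -- the range as a submodule, closed and complete
  set R : Submodule ℝ H := LinearMap.range (l : H' →ₗ[ℝ] H) with hR
  have hRset : (R : Set H) = Set.range l := by
    ext x; simp [hR, LinearMap.mem_range]
  have hRclosed : IsClosed (R : Set H) := by rw [hRset]; exact hclosed
  haveI : CompleteSpace R := hRclosed.completeSpace_coe
  -- the restriction of l to q, as an equivalence onto R
  set g : q →L[ℝ] R :=
    ContinuousLinearMap.codRestrict (l.comp q.subtypeL) R
      (fun x => LinearMap.mem_range_self _ _) with hg
  have hgker : LinearMap.ker (g : q →ₗ[ℝ] R) = ⊥ := by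
    rw [Submodule.eq_bot_iff]
    rintro ⟨x, hxq⟩ hx
    have hlx : l x = 0 := by
      have := congrArg (Subtype.val) hx
      exact this
    have hxk : x ∈ LinearMap.ker (l : H' →ₗ[ℝ] H) := hlx
    have : x = 0 := (Submodule.disjoint_def.mp hcompl.disjoint) x hxk hxq
    exact Subtype.ext this
  have hgrange : LinearMap.range (g : q →ₗ[ℝ] R) = ⊤ := by
    rw [Submodule.eq_top_iff']
    rintro ⟨y, hy⟩
    obtain ⟨v, hv⟩ := hy
    refine ⟨q.linearProjOfIsCompl (LinearMap.ker (l : H' →ₗ[ℝ] H)) hcompl.symm v, ?_⟩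
    apply Subtype.ext
    have hv' : ((LinearMap.ker (l : H' →ₗ[ℝ] H) : Submodule ℝ H').linearProjOfIsCompl q hcompl v : H')
        + (q.linearProjOfIsCompl (LinearMap.ker (l : H' →ₗ[ℝ] H)) hcompl.symm v : H') = v :=
      Submodule.projection_add_projection_eq_self hcompl v
    have hk0 : l (((LinearMap.ker (l : H' →ₗ[ℝ] H) : Submodule ℝ H').linearProjOfIsCompl q hcompl v : H')) = 0 :=
      ((LinearMap.ker (l : H' →ₗ[ℝ] H) : Submodule ℝ H').linearProjOfIsCompl q hcompl v).2
    have : l ((q.linearProjOfIsCompl (LinearMap.ker (l : H' →ₗ[ℝ] H)) hcompl.symm v : H')) = l v := by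
      conv_rhs => rw [← hv']
      simp [map_add, hk0]
    exact this.trans hv
  set e : q ≃L[ℝ] R := ContinuousLinearEquiv.ofBijective g hgker hgrange with he
  -- sequential compactness
  have hseq : IsSeqCompact P := by
    intro u hu
    -- extract convergence of c ∘ u
    have hcu : ∀ n, c (u n) ∈ closure (c '' P) := fun n =>
      subset_closure (Set.mem_image_of_mem c (hu n))
    obtain ⟨y, -, φ1, hφ1, hy⟩ := (hcompact P hPbdd).tendsto_subseq hcu
    -- extract convergence of f ∘ u ∘ φ1
    have hfu : ∀ n, f (u (φ1 n)) ∈ K := fun n => hu (φ1 n)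
    obtain ⟨z, -, φ2, hφ2, hz⟩ := hK.tendsto_subseq hfu
    set ψ : ℕ → ℕ := φ1 ∘ φ2 with hψ
    have hψmono : StrictMono ψ := hφ1.comp hφ2
    have hcψ : Tendsto (fun n => c (u (ψ n))) atTop (𝓝 y) := by
      have := hy.comp hφ2.tendsto_atTop
      simpa [Function.comp_def, hψ] using this
    have hlψ : Tendsto (fun n => l (u (ψ n))) atTop (𝓝 (z - y)) := by
      have : (fun n => l (u (ψ n))) = fun n => f (u (ψ n)) - c (u (ψ n)) := by
        funext n; simp [hf]
      rw [this]
      exact (by simpa [Function.comp_def, hψ] using hz : Tendsto (fun n => f (u (ψ n))) atTop (𝓝 z)).sub hcψ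
    -- kernel components
    set π : H' →L[ℝ] (LinearMap.ker (l : H' →ₗ[ℝ] H) : Submodule ℝ H') :=
      (LinearMap.ker (l : H' →ₗ[ℝ] H) : Submodule ℝ H').linearProjOfClosedCompl q hcompl hkclosed hqclosed with hπ
    obtain ⟨C, hC⟩ := hPbdd.exists_norm_le
    have hkbdd : ∀ n, π (u (ψ n)) ∈ Metric.closedBall (0 : (LinearMap.ker (l : H' →ₗ[ℝ] H) : Submodule ℝ H')) (‖π‖ * C) := by
      intro n
      rw [Metric.mem_closedBall, dist_zero_right]
      calc ‖π (u (ψ n))‖ ≤ ‖π‖ * ‖u (ψ n)‖ := π.le_opNorm _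
        _ ≤ ‖π‖ * C := by
            exact mul_le_mul_of_nonneg_left (hC _ (hu _)) π.opNorm_nonneg
    haveI : ProperSpace (LinearMap.ker (l : H' →ₗ[ℝ] H) : Submodule ℝ H') :=
      FiniteDimensional.proper ℝ _
    obtain ⟨k₀, -, φ3, hφ3, hk₀⟩ :=
      (isCompact_closedBall (0 : (LinearMap.ker (l : H' →ₗ[ℝ] H) : Submodule ℝ H')) (‖π‖ * C)).tendsto_subseq hkbdd
    set χ : ℕ → ℕ := ψ ∘ φ3 with hχ
    have hχmono : StrictMono χ := hψmono.comp hφ3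
    -- limit of l along χ
    have hlχ : Tendsto (fun n => l (u (χ n))) atTop (𝓝 (z - y)) := by
      have := hlψ.comp hφ3.tendsto_atTop
      simpa [Function.comp_def, hχ] using this
    -- z - y ∈ R
    have hzyR : z - y ∈ R := by
      have : z - y ∈ (R : Set H) :=
        hRclosed.mem_of_tendsto hlχ
          (Filter.Eventually.of_forall fun n => LinearMap.mem_range_self _ _)
      exact this
    -- q components converge
    have hlR : Tendsto (fun n => (⟨l (u (χ n)), LinearMap.mem_range_self _ _⟩ : R))
        atTop (𝓝 (⟨z - y, hzyR⟩ : R)) := by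
      rw [tendsto_subtype_rng]
      exact hlχ
    set ρ : H' →L[ℝ] q := q.linearProjOfClosedCompl (LinearMap.ker (l : H' →ₗ[ℝ] H)) hcompl.symm hqclosed hkclosed with hρ
    have hgρ : ∀ v : H', g (ρ v) = ⟨l v, LinearMap.mem_range_self _ _⟩ := by
      intro v
      apply Subtype.ext
      have hv' : ((LinearMap.ker (l : H' →ₗ[ℝ] H) : Submodule ℝ H').linearProjOfIsCompl q hcompl v : H')
          + (q.linearProjOfIsCompl (LinearMap.ker (l : H' →ₗ[ℝ] H)) hcompl.symm v : H') = v :=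
        Submodule.projection_add_projection_eq_self hcompl v
      have hk0 : l (((LinearMap.ker (l : H' →ₗ[ℝ] H) : Submodule ℝ H').linearProjOfIsCompl q hcompl v : H')) = 0 :=
        ((LinearMap.ker (l : H' →ₗ[ℝ] H) : Submodule ℝ H').linearProjOfIsCompl q hcompl v).2
      have : l ((q.linearProjOfIsCompl (LinearMap.ker (l : H' →ₗ[ℝ] H)) hcompl.symm v : H')) = l v := by
        conv_rhs => rw [← hv']
        simp [map_add, hk0]
      exact this
    have hρeq : ∀ n, ρ (u (χ n)) = e.symm ⟨l (u (χ n)), LinearMap.mem_range_self _ _⟩ := by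
      intro n
      have : e (ρ (u (χ n))) = ⟨l (u (χ n)), LinearMap.mem_range_self _ _⟩ := by
        rw [he, ContinuousLinearEquiv.coeFn_ofBijective]
        exact hgρ _
      rw [← this, ContinuousLinearEquiv.symm_apply_apply]
    have hρtend : Tendsto (fun n => ρ (u (χ n))) atTop (𝓝 (e.symm ⟨z - y, hzyR⟩)) := by
      have := (e.symm.continuous.tendsto _).comp hlR
      simpa [Function.comp_def, hρeq] using this
    -- kernel components along χ
    have hktend : Tendsto (fun n => π (u (χ n))) atTop (𝓝 k₀) := by
      have hππ : ∀ m, π (u (ψ m)) = (LinearMap.ker (l : H' →ₗ[ℝ] H) : Submodule ℝ H').linearProjOfIsCompl q hcompl (u (ψ m)) := by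
        intro m
        rw [hπ, Submodule.coe_continuous_linearProjOfClosedCompl']
        rfl
      simpa [Function.comp_def, hχ] using hk₀
    -- total convergence
    set x : H' := (k₀ : H') + ((e.symm ⟨z - y, hzyR⟩ : q) : H') with hx
    have hutend : Tendsto (fun n => u (χ n)) atTop (𝓝 x) := by
      have hdecomp : ∀ n, u (χ n) = (π (u (χ n)) : H') + (ρ (u (χ n)) : H') := by
        intro n
        rw [hπ, hρ, Submodule.coe_continuous_linearProjOfClosedCompl',
          Submodule.coe_continuous_linearProjOfClosedCompl']
        exact (Submodule.projection_add_projection_eq_self hcompl _).symm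
      have h1 : Tendsto (fun n => (π (u (χ n)) : H')) atTop (𝓝 (k₀ : H')) :=
        (continuous_subtype_val.tendsto _).comp hktend
      have h2 : Tendsto (fun n => (ρ (u (χ n)) : H')) atTop (𝓝 ((e.symm ⟨z - y, hzyR⟩ : q) : H')) :=
        (continuous_subtype_val.tendsto _).comp hρtend
      have := h1.add h2
      rw [hx]
      exact this.congr (fun n => (hdecomp n).symm)
    have hxP : x ∈ P :=
      hPclosed.mem_of_tendsto hutend (Filter.Eventually.of_forall fun n => hu (χ n))
    exact ⟨x, hxP, χ, hχmono, hutend⟩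
  exact hseq.isCompact
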